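/- Under the recursion setup (with all marginals of G_{m,k} equal to g_{m,k}), for all integers 0 ≤ m < n and all x ∈ ℝ, the lower recursion bound holds: F̄_n^m(x) ≥ ∑_{k≥1} p_{m,k} · ∫_ℝ Q_{1,k}(F̄_n^{m+1}(x − y)) dg_{m,k}(y), where Q_{1,k}(u) = 1 − (1−u)^k. -/

import Mathlib

open MeasureTheory Set Filter

lemma amgm_aux (k : ℕ) (hk : 0 < k) (a : Fin k → ℝ) (ha : ∀ i, 0 ≤ a i) :
    ∏ i, a i ≤ (∑ i, a i ^ k) * (k : ℝ)⁻¹ := by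
  have hk' : (k : ℝ) ≠ 0 := Nat.cast_ne_zero.mpr hk.ne'
  have h := Real.geom_mean_le_arith_mean_weighted Finset.univ
    (fun _ : Fin k => (k : ℝ)⁻¹) (fun i => a i ^ k)
    (fun i _ => by positivity) (by simp [Finset.card_univ]; field_simp)
    (fun i _ => pow_nonneg (ha i) k)
  calc ∏ i, a i = ∏ i, ((a i ^ k) ^ ((k:ℝ)⁻¹ : ℝ)) := by
        refine Finset.prod_congr rfl fun i _ => ?_
        rw [← Real.rpow_natCast (a i) k, ← Real.rpow_mul (ha i),
          mul_inv_cancel₀ hk', Real.rpow_one]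
    _ ≤ ∑ i, (k:ℝ)⁻¹ * a i ^ k := h
    _ = (∑ i, a i ^ k) * (k:ℝ)⁻¹ := by rw [← Finset.mul_sum, mul_comm]

lemma int_aux {α : Type*} [MeasurableSpace α] (μ : Measure α) [IsFiniteMeasure μ]
    (f : α → ℝ) (hf : Measurable f) (hb : ∀ a, ‖f a‖ ≤ 1) : Integrable f μ :=
  (integrable_const 1).mono' hf.aestronglyMeasurable (ae_of_all _ hb)


/-- STATEMENT 0: Under the recursion setup (all marginals of `G m k` equal `g m k`),
for all `0 ≤ m < n` and all real `x`, the lower recursion bound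
`F̄_n^m(x) ≥ ∑_{k≥1} p_{m,k} ∫ Q_{1,k}(F̄_n^{m+1}(x−y)) dg_{m,k}(y)` holds,
where `Q_{1,k}(u) = 1 − (1−u)^k`. -/
theorem stmt_1
    (p : ℕ → ℕ → ℝ)
    (G : (n : ℕ) → (k : ℕ) → Measure (Fin k → ℝ))
    (g : ℕ → ℕ → Measure ℝ)
    (hp0 : ∀ n, p n 0 = 0)
    (hpnonneg : ∀ n k, 0 ≤ p n k)
    (hpsum : ∀ n, HasSum (p n) 1)
    (hpmean : ∀ n, Summable (fun k : ℕ => (k : ℝ) * p n k))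
    (hGprob : ∀ n k, IsProbabilityMeasure (G n k))
    (hgprob : ∀ n k, IsProbabilityMeasure (g n k))
    (hmarg : ∀ n k (i : Fin k), (G n k).map (fun y => y i) = g n k)
    (F : ℕ → ℕ → ℝ → ℝ)
    (hF01 : ∀ n m, m ≤ n → ∀ x, F n m x ∈ Icc (0 : ℝ) 1)
    (hFanti : ∀ n m, m ≤ n → Antitone (F n m))
    (hFrc : ∀ n m, m ≤ n → ∀ x, ContinuousWithinAt (F n m) (Ici x) x)
    (hFn1 : ∀ n (x : ℝ), x < 0 → F n n x = 1)
    (hFn0 : ∀ n (x : ℝ), 0 ≤ x → F n n x = 0)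
    (hrec : ∀ n m, m < n → ∀ x : ℝ,
      F n m x = 1 - ∑' k : ℕ, p m k *
        ∫ y : Fin k → ℝ, (∏ i, (1 - F n (m + 1) (x - y i))) ∂(G m k))
    (n m : ℕ) (hmn : m < n) (x : ℝ) :
    ∑' k : ℕ, p m k * ∫ y : ℝ, (1 - (1 - F n (m + 1) (x - y)) ^ k) ∂(g m k) ≤ F n m x := by
  
  have hm1 : m + 1 ≤ n := hmn
  set h : ℝ → ℝ := fun y => 1 - F n (m + 1) (x - y) with hh_def
  have hmeasF : Measurable (F n (m + 1)) := (hFanti n (m + 1) hm1).measurable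
  have hh : Measurable h :=
    measurable_const.sub (hmeasF.comp (measurable_const.sub measurable_id))
  have h01 : ∀ y, h y ∈ Icc (0 : ℝ) 1 := by
    intro y
    have := hF01 n (m + 1) hm1 (x - y)
    constructor <;> simp [hh_def] <;> linarith [this.1, this.2]
  -- abbreviations
  set A : ℕ → ℝ := fun k => ∫ y : Fin k → ℝ, (∏ i, h (y i)) ∂(G m k) with hA_def
  set B : ℕ → ℝ := fun k => ∫ y : ℝ, h y ^ k ∂(g m k) with hB_def
  -- integrability facts
  have hintprod : ∀ k, Integrable (fun y : Fin k → ℝ => ∏ i, h (y i)) (G m k) := by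
    intro k
    haveI := hGprob m k
    refine int_aux _ _ (Finset.measurable_prod _ fun i _ => hh.comp (measurable_pi_apply i)) ?_
    intro y
    rw [Real.norm_eq_abs, abs_of_nonneg (Finset.prod_nonneg fun i _ => (h01 _).1)]
    exact Finset.prod_le_one (fun i _ => (h01 _).1) (fun i _ => (h01 _).2)
  have hnormpow : ∀ (k : ℕ) (y : ℝ), ‖h y ^ k‖ ≤ 1 := by
    intro k y
    rw [Real.norm_eq_abs, abs_of_nonneg (pow_nonneg (h01 y).1 k)]
    exact pow_le_one₀ (h01 y).1 (h01 y).2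
  have hintpow : ∀ k, Integrable (fun y : ℝ => h y ^ k) (g m k) := by
    intro k
    haveI := hgprob m k
    exact int_aux _ _ (hh.pow_const k) (hnormpow k)
  have hA01 : ∀ k, A k ∈ Icc (0 : ℝ) 1 := by
    intro k
    haveI := hGprob m k
    constructor
    · exact integral_nonneg fun y => Finset.prod_nonneg fun i _ => (h01 _).1
    · calc A k ≤ ∫ _ : Fin k → ℝ, (1 : ℝ) ∂(G m k) := by
            refine integral_mono (hintprod k) (integrable_const 1) fun y => ?_
            exact Finset.prod_le_one (fun i _ => (h01 _).1) (fun i _ => (h01 _).2)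
        _ = 1 := by simp
  have hB01 : ∀ k, B k ∈ Icc (0 : ℝ) 1 := by
    intro k
    haveI := hgprob m k
    constructor
    · exact integral_nonneg fun y => pow_nonneg (h01 y).1 k
    · calc B k ≤ ∫ _ : ℝ, (1 : ℝ) ∂(g m k) := by
            refine integral_mono (hintpow k) (integrable_const 1) fun y => ?_
            exact pow_le_one₀ (h01 y).1 (h01 y).2
        _ = 1 := by simp
  -- the key inequality A k ≤ B k for positive k
  have key : ∀ k : ℕ, 0 < k → A k ≤ B k := by
    intro k hk
    haveI := hGprob m k
    haveI := hgprob m k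
    have hk' : (k : ℝ) ≠ 0 := Nat.cast_ne_zero.mpr hk.ne'
    have hinti : ∀ i : Fin k, Integrable (fun y : Fin k → ℝ => h (y i) ^ k) (G m k) := by
      intro i
      exact int_aux _ _ ((hh.comp (measurable_pi_apply i)).pow_const k)
        (fun y => hnormpow k (y i))
    have hmargint : ∀ i : Fin k,
        (∫ y : Fin k → ℝ, h (y i) ^ k ∂(G m k)) = B k := by
      intro i
      show _ = ∫ y : ℝ, h y ^ k ∂(g m k)
      rw [← hmarg m k i, integral_map (measurable_pi_apply i).aemeasurable
        ((hh.pow_const k).aestronglyMeasurable)]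
    calc A k ≤ ∫ y : Fin k → ℝ, (∑ i, h (y i) ^ k) * (k : ℝ)⁻¹ ∂(G m k) := by
          refine integral_mono (hintprod k) ?_ fun y => ?_
          · exact (integrable_finset_sum _ fun i _ => hinti i).mul_const _
          · exact amgm_aux k hk (fun i => h (y i)) (fun i => (h01 _).1)
      _ = (∑ i : Fin k, ∫ y : Fin k → ℝ, h (y i) ^ k ∂(G m k)) * (k : ℝ)⁻¹ := by
          rw [integral_mul_const, integral_finset_sum _ fun i _ => hinti i]
      _ = ((k : ℝ) * B k) * (k : ℝ)⁻¹ := by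
          rw [Finset.sum_congr rfl fun i _ => hmargint i]
          simp [Finset.card_univ, mul_comm]
      _ = B k := by field_simp
  -- rewrite each LHS integral
  have hLHS : ∀ k : ℕ,
      (∫ y : ℝ, (1 - (1 - F n (m + 1) (x - y)) ^ k) ∂(g m k)) = 1 - B k := by
    intro k
    haveI := hgprob m k
    have : (fun y : ℝ => (1 : ℝ) - (1 - F n (m + 1) (x - y)) ^ k)
        = fun y => 1 - h y ^ k := rfl
    rw [this, integral_sub (integrable_const 1) (hintpow k), integral_const]
    simp
    rfl
  simp only [hLHS]
  -- summability
  have hpsummable : Summable (p m) := (hpsum m).summable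
  have hsumA : Summable (fun k => p m k * A k) := by
    refine Summable.of_norm_bounded hpsummable fun k => ?_
    rw [Real.norm_eq_abs, abs_mul, abs_of_nonneg (hpnonneg m k),
      abs_of_nonneg (hA01 k).1]
    exact mul_le_of_le_one_right (hpnonneg m k) (hA01 k).2
  have hsumB : Summable (fun k => p m k * B k) := by
    refine Summable.of_norm_bounded hpsummable fun k => ?_
    rw [Real.norm_eq_abs, abs_mul, abs_of_nonneg (hpnonneg m k),
      abs_of_nonneg (hB01 k).1]
    exact mul_le_of_le_one_right (hpnonneg m k) (hB01 k).2
  have hAB : ∑' k, p m k * A k ≤ ∑' k, p m k * B k := by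
    refine Summable.tsum_le_tsum (fun k => ?_) hsumA hsumB
    rcases Nat.eq_zero_or_pos k with hk | hk
    · simp [hk, hp0 m]
    · exact mul_le_mul_of_nonneg_left (key k hk) (hpnonneg m k)
  have hFval : F n m x = 1 - ∑' k, p m k * A k := hrec n m hmn x
  have htsum : ∑' k, p m k * (1 - B k) = 1 - ∑' k, p m k * B k := by
    have : (fun k => p m k * (1 - B k)) = fun k => p m k - p m k * B k := by
      funext k; ring
    rw [this, Summable.tsum_sub hpsummable hsumB, (hpsum m).tsum_eq]
  rw [hFval, htsum]
  linarith
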